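/- Let A be a Banach algebra equipped with a nonzero multiplicative continuous linear functional e : A → ℂ, and let P = {a ∈ A : e(a) = 1, ‖a‖ = 1}. Suppose there exists a net (ν_α) in P such that for every ν ∈ P, ‖ν·ν_α − ν_α‖ → 0. Then there exists m ∈ A** with m ≥ 0 in the sense that m(e) = 1 = ‖m‖, and m(φ·ν) = m(φ) for every ν ∈ P and φ ∈ A*, where (φ·ν)(μ) := φ(ν·μ). -/

import Mathlib

open Filter Topology

set_option maxHeartbeats 1000000

/-- A cluster value of a filter converging in a T2 space equals the limit. -/
lemma mapClusterPt_eq_of_tendsto {ι X : Type*} [TopologicalSpace X] [T2Space X]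
    {F : Filter ι} {u : ι → X} {a b : X} (h : MapClusterPt a F u)
    (h2 : Tendsto u F (𝓝 b)) : a = b := by
  refine eq_of_nhds_neBot (NeBot.mono ?_ (le_inf inf_le_left (inf_le_right.trans h2)))
  exact h

/-- If a Banach algebra `A` with nonzero multiplicative continuous functional `e` and
`P = {a : e(a) = 1, ‖a‖ = 1}` admits a net `(ν_α)` in `P` with `‖ν·ν_α − ν_α‖ → 0` for every
`ν ∈ P`, then there is a topological left invariant mean: `m ∈ A**` with `m(e) = 1 = ‖m‖` and
`m(φ·ν) = m(φ)` for all `ν ∈ P`, `φ ∈ A*`, where `(φ·ν)(μ) = φ(ν·μ)`. -/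
theorem exists_TLIM_of_asymptotically_invariant_net
    {A : Type*} [NormedRing A] [NormedAlgebra ℂ A] [CompleteSpace A]
    (e : A →L[ℂ] ℂ) (he : e ≠ 0) (hmul : ∀ a b : A, e (a * b) = e a * e b)
    (P : Set A) (hP : P = {a : A | e a = 1 ∧ ‖a‖ = 1})
    {ι : Type*} (F : Filter ι) [F.NeBot] (ν' : ι → A) (hν' : ∀ i, ν' i ∈ P)
    (hconv : ∀ ν ∈ P, Tendsto (fun i => ‖ν * ν' i - ν' i‖) F (nhds 0)) :
    ∃ m : (A →L[ℂ] ℂ) →L[ℂ] ℂ, m e = 1 ∧ ‖m‖ = 1 ∧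
      ∀ ν ∈ P, ∀ φ : A →L[ℂ] ℂ,
        m (φ.comp (ContinuousLinearMap.mul ℂ A ν)) = m φ := by
  -- `e 1 = 1`
  have hex : ∃ b : A, e b ≠ 0 := by
    by_contra h
    push_neg at h
    exact he (by ext b; simpa using h b)
  obtain ⟨b, hb⟩ := hex
  have he1 : e 1 = 1 := by
    have : e 1 * e b = 1 * e b := by rw [← hmul, one_mul, one_mul]
    exact mul_right_cancel₀ hb this
  -- `e (a ^ n) = (e a) ^ n`
  have hepow : ∀ (a : A) (n : ℕ), e (a ^ n) = (e a) ^ n := by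
    intro a n
    induction n with
    | zero => simpa using he1
    | succ n ih => rw [pow_succ, hmul, ih, pow_succ]
  -- `‖e‖ ≤ 1` via the spectral-radius trick
  have heval : ∀ a : A, ‖e a‖ ≤ ‖a‖ := by
    intro a
    by_contra h
    push_neg at h
    have ha : a ≠ 0 := by
      rintro rfl
      simp at h
    have ha0 : (0 : ℝ) < ‖a‖ := norm_pos_iff.mpr ha
    set r : ℝ := ‖e a‖ / ‖a‖ with hr
    have hr1 : 1 < r := (one_lt_div ha0).2 h
    obtain ⟨n, hn⟩ := pow_unbounded_of_one_lt (‖e‖) hr1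
    -- bump to `n + 1`
    have hn' : ‖e‖ < r ^ (n + 1) := hn.trans_le (pow_le_pow_right₀ hr1.le (Nat.le_succ n))
    have hbound : r ^ (n + 1) ≤ ‖e‖ := by
      have h1 : ‖e a‖ ^ (n + 1) ≤ ‖e‖ * ‖a‖ ^ (n + 1) := by
        calc ‖e a‖ ^ (n + 1) = ‖(e a) ^ (n + 1)‖ := (norm_pow _ _).symm
          _ = ‖e (a ^ (n + 1))‖ := by rw [hepow]
          _ ≤ ‖e‖ * ‖a ^ (n + 1)‖ := e.le_opNorm _
          _ ≤ ‖e‖ * ‖a‖ ^ (n + 1) :=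
            mul_le_mul_of_nonneg_left (norm_pow_le' a (Nat.succ_pos n)) (norm_nonneg e)
      rw [hr, div_pow, div_le_iff₀ (pow_pos ha0 _)]
      linarith
    exact absurd hbound (not_le.2 hn')
  have heop : ‖e‖ ≤ 1 := e.opNorm_le_bound zero_le_one (fun a => by
    simpa using heval a)
  -- the net in the double dual, viewed in the weak-star topology
  set g : ι → WeakDual ℂ (A →L[ℂ] ℂ) :=
    fun i => StrongDual.toWeakDual (NormedSpace.inclusionInDoubleDual ℂ A (ν' i)) with hg
  have hgS : ∀ i, g i ∈ WeakDual.toStrongDual ⁻¹' Metric.closedBall 0 1 := by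
    intro i
    have hnorm : ‖ν' i‖ = 1 := ((hP ▸ hν' i : _)).2
    have : ‖NormedSpace.inclusionInDoubleDual ℂ A (ν' i)‖ ≤ 1 := by
      exact hnorm ▸ NormedSpace.double_dual_bound ℂ A (ν' i)
    exact (mem_closedBall_zero_iff (E := StrongDual ℂ (A →L[ℂ] ℂ))).2 this
  have hcompact : IsCompact (WeakDual.toStrongDual ⁻¹' Metric.closedBall (0 : StrongDual ℂ (A →L[ℂ] ℂ)) 1) :=
    WeakDual.isCompact_closedBall 0 1
  have hle : Filter.map g F ≤
      𝓟 (WeakDual.toStrongDual ⁻¹' Metric.closedBall (0 : StrongDual ℂ (A →L[ℂ] ℂ)) 1) := by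
    rw [Filter.le_principal_iff, Filter.mem_map]
    exact Filter.univ_mem' hgS
  obtain ⟨m₀, hm₀S, hcl⟩ := hcompact.exists_clusterPt hle
  -- key: for every `φ`, `m₀ φ` is a cluster value of `i ↦ φ (ν' i)`
  have key : ∀ φ : A →L[ℂ] ℂ, MapClusterPt (m₀ φ) F (fun i => φ (ν' i)) := by
    intro φ
    have h1 : MapClusterPt m₀ F g := hcl
    have h2 := h1.continuousAt_comp (f := fun x : WeakDual ℂ (A →L[ℂ] ℂ) => x φ)
      (WeakDual.eval_continuous φ).continuousAt
    exact h2
  refine ⟨WeakDual.toStrongDual m₀, ?_, ?_, ?_⟩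
  · -- m e = 1
    have h1 : Tendsto (fun i => e (ν' i)) F (𝓝 1) := by
      have : ∀ i, e (ν' i) = 1 := fun i => ((hP ▸ hν' i : _)).1
      simpa [this] using tendsto_const_nhds (α := ι) (x := (1 : ℂ)) (f := F)
    exact mapClusterPt_eq_of_tendsto (key e) h1
  · -- ‖m‖ = 1
    have hle1 : ‖WeakDual.toStrongDual m₀‖ ≤ 1 := by
      exact (mem_closedBall_zero_iff (E := StrongDual ℂ (A →L[ℂ] ℂ))).1 hm₀S
    have hme : m₀ e = 1 := by
      have h1 : Tendsto (fun i => e (ν' i)) F (𝓝 1) := by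
        have : ∀ i, e (ν' i) = 1 := fun i => ((hP ▸ hν' i : _)).1
        simpa [this] using tendsto_const_nhds (α := ι) (x := (1 : ℂ)) (f := F)
      exact mapClusterPt_eq_of_tendsto (key e) h1
    have hge1 : (1 : ℝ) ≤ ‖WeakDual.toStrongDual m₀‖ := by
      have : ‖m₀ e‖ ≤ ‖WeakDual.toStrongDual m₀‖ * ‖e‖ :=
        (WeakDual.toStrongDual m₀).le_opNorm e
      rw [hme, norm_one] at this
      nlinarith [norm_nonneg e, (WeakDual.toStrongDual m₀).opNorm_nonneg]
    linarith
  · -- invariance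
    intro ν hν φ
    set ψ : A →L[ℂ] ℂ := φ.comp (ContinuousLinearMap.mul ℂ A ν) - φ with hψ
    have hψ0 : m₀ ψ = 0 := by
      have hnormbd : ∀ i, ‖ψ (ν' i)‖ ≤ ‖φ‖ * ‖ν * ν' i - ν' i‖ := by
        intro i
        have h1 : ψ (ν' i) = φ (ν * ν' i) - φ (ν' i) := by
          rw [hψ]
          simp only [ContinuousLinearMap.sub_apply, ContinuousLinearMap.comp_apply,
            ContinuousLinearMap.mul_apply']
        have h2 : φ (ν * ν' i) - φ (ν' i) = φ (ν * ν' i - ν' i) := (map_sub φ _ _).symm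
        rw [h1, h2]
        exact φ.le_opNorm _
      have htend : Tendsto (fun i => ψ (ν' i)) F (𝓝 0) := by
        apply squeeze_zero_norm hnormbd
        have := (hconv ν hν).const_mul ‖φ‖
        simpa using this
      exact mapClusterPt_eq_of_tendsto (key ψ) htend
    have : m₀ (φ.comp (ContinuousLinearMap.mul ℂ A ν)) - m₀ φ = 0 := by
      rw [← map_sub]; exact hψ0
    have h' := sub_eq_zero.mp this
    exact h'
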